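/- Let f be a non-degenerate triangle with vertices z1, z2, z3 ∈ ℂ, angles α1, α2, α3, circumradius R, and let D(f) be the 3×3 matrix with diagonal entries D_{kk} = (cot α_j + cot α_l)/(8R²) (where {j,l} = {1,2,3}\{k}) and off-diagonal entries as in the Kähler form of the triangle. Then the vectors (1,1,1) and (z̄1, z̄2, z̄3) are right null-vectors of D(f): D(f)·(1,1,1)ᵀ = 0 and D(f)·(z̄1, z̄2, z̄3)ᵀ = 0. -/

import Mathlib

open Real

/-- The 3×3 Kähler matrix `D(f)` of a triangle with angles `α1, α2, α3` and
circumradius `R`. -/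
noncomputable def Dmat (α1 α2 α3 R : ℝ) : Matrix (Fin 3) (Fin 3) ℂ :=
  (1 / (8 * (R : ℂ) ^ 2)) •
    !![(Real.cot α2 : ℂ) + (Real.cot α3 : ℂ),
        -(Real.cot α3 : ℂ) - Complex.I, -(Real.cot α2 : ℂ) + Complex.I;
      -(Real.cot α3 : ℂ) + Complex.I,
        (Real.cot α3 : ℂ) + (Real.cot α1 : ℂ), -(Real.cot α1 : ℂ) - Complex.I;
      -(Real.cot α2 : ℂ) - Complex.I, -(Real.cot α1 : ℂ) + Complex.I,
        (Real.cot α1 : ℂ) + (Real.cot α2 : ℂ)]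

lemma expA (θ : ℝ) (h : Real.sin θ ≠ 0) :
    Complex.exp (Complex.I * θ) * (Complex.I - (Real.cot θ : ℂ)) = -1 / (Real.sin θ : ℂ) := by
  have hs : Complex.sin ↑θ ≠ 0 := by rw [← Complex.ofReal_sin]; exact_mod_cast h
  rw [mul_comm Complex.I (θ:ℂ), Complex.exp_mul_I, Real.cot_eq_cos_div_sin,
    ← Complex.ofReal_cos, ← Complex.ofReal_sin]
  push_cast
  field_simp
  linear_combination (-1 : ℂ) * Complex.sin_sq_add_cos_sq (θ:ℂ) + (Complex.sin (θ:ℂ)^2) * Complex.I_sq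

lemma cot_add_cot (β γ : ℝ) (hb : Real.sin β ≠ 0) (hc : Real.sin γ ≠ 0) :
    Real.cot β + Real.cot γ = Real.sin (β + γ) / (Real.sin β * Real.sin γ) := by
  rw [Real.cot_eq_cos_div_sin, Real.cot_eq_cos_div_sin, Real.sin_add]
  field_simp
  ring

/-- For a non-degenerate counterclockwise triangle `(z1,z2,z3)` with angle `αk`
at vertex `zk` and circumradius `R`, the vectors `(1,1,1)` and `(z̄1,z̄2,z̄3)`
are right null-vectors of the Kähler matrix `D(f)`. -/
theorem stmt7 (α1 α2 α3 R : ℝ) (z1 z2 z3 : ℂ)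
    (h1 : α1 ∈ Set.Ioo 0 π) (h2 : α2 ∈ Set.Ioo 0 π) (h3 : α3 ∈ Set.Ioo 0 π)
    (hsum : α1 + α2 + α3 = π) (hR : 0 < R)
    (hz1 : z3 - z1 = (z2 - z1) * ((Real.sin α2 / Real.sin α3 : ℝ) : ℂ) *
      Complex.exp (Complex.I * (α1 : ℂ)))
    (hz2 : z1 - z2 = (z3 - z2) * ((Real.sin α3 / Real.sin α1 : ℝ) : ℂ) *
      Complex.exp (Complex.I * (α2 : ℂ)))
    (hz3 : z2 - z3 = (z1 - z3) * ((Real.sin α1 / Real.sin α2 : ℝ) : ℂ) *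
      Complex.exp (Complex.I * (α3 : ℂ)))
    (hl : ‖z2 - z1‖ = 2 * R * Real.sin α3) :
    (Dmat α1 α2 α3 R).mulVec ![1, 1, 1] = 0 ∧
    (Dmat α1 α2 α3 R).mulVec
      ![(starRingEnd ℂ) z1, (starRingEnd ℂ) z2, (starRingEnd ℂ) z3] = 0 := by
  have hs1 : Real.sin α1 ≠ 0 := ne_of_gt (Real.sin_pos_of_pos_of_lt_pi h1.1 h1.2)
  have hs2 : Real.sin α2 ≠ 0 := ne_of_gt (Real.sin_pos_of_pos_of_lt_pi h2.1 h2.2)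
  have hs3 : Real.sin α3 ≠ 0 := ne_of_gt (Real.sin_pos_of_pos_of_lt_pi h3.1 h3.2)
  have hA1 := expA α1 hs1
  have hA2 := expA α2 hs2
  have hA3 := expA α3 hs3
  -- cotangent sum identities
  have hC23 : (Real.cot α2 : ℂ) + (Real.cot α3 : ℂ)
      = (Real.sin α1 : ℂ) / ((Real.sin α2 : ℂ) * (Real.sin α3 : ℂ)) := by
    have : Real.cot α2 + Real.cot α3 = Real.sin α1 / (Real.sin α2 * Real.sin α3) := by
      rw [cot_add_cot α2 α3 hs2 hs3]
      congr 1
      rw [show α2 + α3 = π - α1 by linarith, Real.sin_pi_sub]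
    exact_mod_cast this
  have hC13 : (Real.cot α1 : ℂ) + (Real.cot α3 : ℂ)
      = (Real.sin α2 : ℂ) / ((Real.sin α1 : ℂ) * (Real.sin α3 : ℂ)) := by
    have : Real.cot α1 + Real.cot α3 = Real.sin α2 / (Real.sin α1 * Real.sin α3) := by
      rw [cot_add_cot α1 α3 hs1 hs3]
      congr 1
      rw [show α1 + α3 = π - α2 by linarith, Real.sin_pi_sub]
    exact_mod_cast this
  have hC12 : (Real.cot α1 : ℂ) + (Real.cot α2 : ℂ)
      = (Real.sin α3 : ℂ) / ((Real.sin α1 : ℂ) * (Real.sin α2 : ℂ)) := by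
    have : Real.cot α1 + Real.cot α2 = Real.sin α3 / (Real.sin α1 * Real.sin α2) := by
      rw [cot_add_cot α1 α2 hs1 hs2]
      congr 1
      rw [show α1 + α2 = π - α3 by linarith, Real.sin_pi_sub]
    exact_mod_cast this
  rw [Complex.ofReal_div] at hz1 hz2 hz3
  -- row identities (conjugated form)
  have E1 : ((Real.cot α2 : ℂ) + (Real.cot α3 : ℂ)) * z1
      + (-(Real.cot α3 : ℂ) + Complex.I) * z2
      + (-(Real.cot α2 : ℂ) - Complex.I) * z3 = 0 := by
    linear_combination (Complex.I - (Real.cot α3 : ℂ)) * hz3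
      + ((z1 - z3) * ((Real.sin α1 : ℂ) / (Real.sin α2 : ℂ))) * hA3
      + (z1 - z3) * hC23
  have E2 : (-(Real.cot α3 : ℂ) - Complex.I) * z1
      + ((Real.cot α3 : ℂ) + (Real.cot α1 : ℂ)) * z2
      + (-(Real.cot α1 : ℂ) + Complex.I) * z3 = 0 := by
    linear_combination (Complex.I - (Real.cot α1 : ℂ)) * hz1
      + ((z2 - z1) * ((Real.sin α2 : ℂ) / (Real.sin α3 : ℂ))) * hA1
      + (z2 - z1) * hC13
  have E3 : (-(Real.cot α2 : ℂ) + Complex.I) * z1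
      + (-(Real.cot α1 : ℂ) - Complex.I) * z2
      + ((Real.cot α1 : ℂ) + (Real.cot α2 : ℂ)) * z3 = 0 := by
    linear_combination (Complex.I - (Real.cot α2 : ℂ)) * hz2
      + ((z3 - z2) * ((Real.sin α3 : ℂ) / (Real.sin α1 : ℂ))) * hA2
      + (z3 - z2) * hC12
  have F1 := congrArg (starRingEnd ℂ) E1
  have F2 := congrArg (starRingEnd ℂ) E2
  have F3 := congrArg (starRingEnd ℂ) E3
  simp only [map_add, map_mul, map_neg, map_sub, Complex.conj_I, Complex.conj_ofReal,
    map_zero] at F1 F2 F3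
  constructor
  · funext i
    fin_cases i <;>
      simp [Dmat, Matrix.mulVec, dotProduct, Fin.sum_univ_three] <;> ring
  · funext i
    fin_cases i <;>
      simp [Dmat, Matrix.mulVec, dotProduct, Fin.sum_univ_three, -Complex.ofReal_cot]
    · linear_combination (1 / (8 * (R:ℂ)^2)) * F1
    · linear_combination (1 / (8 * (R:ℂ)^2)) * F2
    · linear_combination (1 / (8 * (R:ℂ)^2)) * F3
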